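/- Let G be a tree and e = uv an edge with deg(u) = 2 and deg(v) ≥ 3. Then meg(G \ {e}) = meg(G) + 1. -/

import Mathlib

open SimpleGraph

variable {V : Type*}

/-- A pair of vertices `u, v` monitors edge `e` in `G` if `u` and `v` are connected
and `e` lies on every shortest path (walk of length `G.dist u v`) between them. -/
def monitors (G : SimpleGraph V) (u v : V) (e : Sym2 V) : Prop :=
  G.Reachable u v ∧ ∀ p : G.Walk u v, p.length = G.dist u v → e ∈ p.edges

/-- `M` is a monitoring edge-geodetic set of `G`. -/
def IsMEGSet (G : SimpleGraph V) (M : Set V) : Prop :=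
  ∀ e ∈ G.edgeSet, ∃ u ∈ M, ∃ v ∈ M, monitors G u v e

/-- The monitoring edge-geodetic number: minimum size of an MEG-set. -/
noncomputable def meg (G : SimpleGraph V) : ℕ :=
  sInf {n | ∃ M : Finset V, IsMEGSet G ↑M ∧ M.card = n}

set_option linter.unusedSectionVars false
set_option linter.unusedVariables false

section Aux

variable [Fintype V] [DecidableEq V] (G : SimpleGraph V) [DecidableRel G.Adj]

/-- Path extension: any non-trivial path in a finite acyclic graph can be extended
to end at a leaf. -/
lemma aux_extend (hG : G.IsAcyclic) :
    ∀ (n : ℕ) (x a : V) (p : G.Walk x a), p.IsPath → p.length ≠ 0 →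
      Fintype.card V ≤ p.length + n →
      ∃ (l : V) (r : G.Walk a l), (p.append r).IsPath ∧ G.degree l = 1 := by
  intro n
  induction n with
  | zero =>
    intro x a p hp hl hcard
    have h1 : p.support.length ≤ Fintype.card V := hp.support_nodup.length_le_card
    rw [Walk.length_support] at h1
    omega
  | succ n IH =>
    intro x a p hp hl hcard
    have hnn : ¬ p.Nil := fun h => hl (Walk.nil_iff_length_eq.mp h)
    have hnnr : ¬ p.reverse.Nil := by
      rw [Walk.nil_iff_length_eq, Walk.length_reverse]; exact hl
    have hprev : G.Adj a (p.reverse.getVert 1) := Walk.adj_snd hnnr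
    by_cases hdeg : G.degree a = 1
    · exact ⟨a, Walk.nil, by simpa using hp, hdeg⟩
    · have h1 : 1 < G.degree a := by
        have : (p.reverse.getVert 1) ∈ G.neighborFinset a := (mem_neighborFinset _ _ _).mpr hprev
        have := Finset.card_pos.mpr ⟨_, this⟩
        rw [card_neighborFinset_eq_degree] at this
        omega
      obtain ⟨c, hcNF, hcne⟩ := Finset.exists_mem_ne h1 (p.reverse.getVert 1)
      have hac : G.Adj a c := (mem_neighborFinset _ _ _).mp hcNF
      have hcs : c ∉ p.support := by
        intro hmem
        have hpath2 : (Walk.cons hac.symm Walk.nil : G.Walk c a).IsPath := by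
          simp [hac.ne']
        have huniq := isAcyclic_iff_path_unique.mp hG
          ⟨p.dropUntil c hmem, hp.dropUntil hmem⟩ ⟨Walk.cons hac.symm Walk.nil, hpath2⟩
        have hdrop : p.dropUntil c hmem = Walk.cons hac.symm Walk.nil :=
          congrArg Subtype.val huniq
        have hps : p = (p.takeUntil c hmem).append (Walk.cons hac.symm Walk.nil) := by
          rw [← hdrop]; exact (Walk.take_spec p hmem).symm
        apply hcne
        rw [hps]
        simp [Walk.reverse_append]
      have hpc : (p.concat hac).IsPath := by
        rw [Walk.isPath_def, Walk.support_concat]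
        simp only [List.concat_eq_append, List.nodup_append]
        exact ⟨hp.support_nodup, List.nodup_singleton _, fun y hy z hz hyz => hcs (by rw [List.mem_singleton] at hz; rwa [hyz, hz] at hy)⟩
      obtain ⟨l, r', hr', hdl⟩ := IH x c (p.concat hac) hpc
        (by rw [Walk.length_concat]; omega) (by rw [Walk.length_concat]; omega)
      exact ⟨l, Walk.cons hac r', by rwa [← Walk.concat_append], hdl⟩

lemma aux_leaf_path (hG : G.IsAcyclic) {a b : V} (hab : G.Adj a b) :
    ∃ (l : V) (p : G.Walk a l), p.IsPath ∧ b ∉ p.support ∧ G.degree l = 1 := by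
  obtain ⟨l, r, hr, hdl⟩ := aux_extend G hG (Fintype.card V) b a
    (Walk.cons hab.symm Walk.nil) (by simp [hab.ne']) (by simp) (by simp)
  rw [Walk.cons_append, Walk.nil_append, Walk.cons_isPath_iff] at hr
  exact ⟨l, r, hr.1, hr.2, hdl⟩

/-- Supports of the two leaf-paths on the two sides of an edge are disjoint. -/
lemma aux_disjoint (hG : G.IsAcyclic) {a b l1 l2 : V} (hab : G.Adj a b)
    (p1 : G.Walk a l1) (p2 : G.Walk b l2) (hp1 : p1.IsPath) (hp2 : p2.IsPath)
    (hb1 : b ∉ p1.support) (ha2 : a ∉ p2.support) :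
    ∀ w, w ∈ p1.support → w ∈ p2.support → False := by
  intro w h1 h2
  have hq1 : ((p1.takeUntil w h1).reverse.concat hab).IsPath := by
    rw [Walk.isPath_def, Walk.support_concat]
    simp only [List.concat_eq_append, List.nodup_append]
    refine ⟨by rw [Walk.support_reverse]; exact (List.nodup_reverse.mpr (hp1.takeUntil h1).support_nodup),
      List.nodup_singleton _, ?_⟩
    refine fun x hx y hy hxy => ?_; rw [List.mem_singleton] at hy; rw [hxy, hy] at hx; revert hx
    rw [Walk.support_reverse, List.mem_reverse]
    exact fun hmem => hb1 (Walk.support_takeUntil_subset _ h1 hmem)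
  have hq2 : ((p2.takeUntil w h2).reverse).IsPath := (hp2.takeUntil h2).reverse
  have huniq := isAcyclic_iff_path_unique.mp hG
    ⟨(p1.takeUntil w h1).reverse.concat hab, hq1⟩ ⟨(p2.takeUntil w h2).reverse, hq2⟩
  have heq : (p1.takeUntil w h1).reverse.concat hab = (p2.takeUntil w h2).reverse :=
    congrArg Subtype.val huniq
  have hmem : a ∈ ((p1.takeUntil w h1).reverse.concat hab).support := by
    rw [Walk.support_concat, List.mem_append]
    left
    rw [Walk.support_reverse, List.mem_reverse]
    exact Walk.start_mem_support _
  rw [heq, Walk.support_reverse, List.mem_reverse] at hmem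
  exact ha2 (Walk.support_takeUntil_subset _ h2 hmem)

lemma aux_leaves_meg (hG : G.IsAcyclic) :
    IsMEGSet G ↑(Finset.univ.filter fun x => G.degree x = 1) := by
  intro e he
  induction e with
  | _ a b =>
    rw [mem_edgeSet] at he
    obtain ⟨l1, p1, hp1, hb1, hd1⟩ := aux_leaf_path G hG he
    obtain ⟨l2, p2, hp2, ha2, hd2⟩ := aux_leaf_path G hG he.symm
    have hdisj := aux_disjoint G hG he p1 p2 hp1 hp2 hb1 ha2
    set P : G.Walk l1 l2 := p1.reverse.append (Walk.cons he p2) with hPdef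
    have hP : P.IsPath := by
      rw [Walk.isPath_def, hPdef, Walk.support_append, Walk.support_cons, List.tail_cons,
        Walk.support_reverse]
      exact List.Nodup.append (List.nodup_reverse.mpr hp1.support_nodup) hp2.support_nodup
        (fun w hw1 hw2 => hdisj w (List.mem_reverse.mp hw1) hw2)
    have heP : s(a, b) ∈ P.edges := by
      rw [hPdef, Walk.edges_append, List.mem_append, Walk.edges_cons]
      exact Or.inr List.mem_cons_self
    refine ⟨l1, by simp [hd1], l2, by simp [hd2], ⟨⟨P⟩, fun q _ => ?_⟩⟩
    have huniq := isAcyclic_iff_path_unique.mp hG ⟨q.bypass, q.bypass_isPath⟩ ⟨P, hP⟩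
    have : q.bypass = P := congrArg Subtype.val huniq
    exact q.edges_bypass_subset (this ▸ heP)

lemma aux_leaf_mem (hG : G.IsAcyclic) {M : Set V} (hM : IsMEGSet G M)
    {l : V} (hl : G.degree l = 1) : l ∈ M := by
  obtain ⟨a, haNF⟩ : (G.neighborFinset l).Nonempty := by
    rw [← Finset.card_pos, card_neighborFinset_eq_degree, hl]; norm_num
  have hla : G.Adj l a := (mem_neighborFinset _ _ _).mp haNF
  obtain ⟨m1, hm1, m2, hm2, hre, hmon⟩ := hM s(l, a) (G.mem_edgeSet.mpr hla)
  obtain ⟨w, hw⟩ := hre.exists_walk_length_eq_dist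
  have hql : w.bypass.length = G.dist m1 m2 :=
    le_antisymm (hw ▸ w.length_bypass_le) (dist_le _)
  have he : s(l, a) ∈ w.bypass.edges := hmon w.bypass hql
  have hqp : w.bypass.IsPath := w.bypass_isPath
  set q := w.bypass with hqdef
  have hls : l ∈ q.support := q.fst_mem_support_of_mem_edges he
  by_cases h1 : l = m1
  · exact h1 ▸ hm1
  by_cases h2 : l = m2
  · exact h2 ▸ hm2
  exfalso
  have hnn1 : ¬ (q.takeUntil l hls).Nil := Walk.not_nil_of_ne (Ne.symm h1)
  have hnn1r : ¬ (q.takeUntil l hls).reverse.Nil := by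
    rw [Walk.nil_iff_length_eq, Walk.length_reverse, ← Walk.nil_iff_length_eq]
    exact hnn1
  have hnn2 : ¬ (q.dropUntil l hls).Nil := Walk.not_nil_of_ne h2
  set c := (q.takeUntil l hls).reverse.getVert 1 with hcdef
  set d := (q.dropUntil l hls).getVert 1 with hddef
  have hlc : G.Adj l c := Walk.adj_snd hnn1r
  have hld : G.Adj l d := Walk.adj_snd hnn2
  have hcd : c = d := by
    have hcard : (G.neighborFinset l).card ≤ 1 := by
      rw [card_neighborFinset_eq_degree, hl]
    exact Finset.card_le_one.mp hcard c ((mem_neighborFinset _ _ _).mpr hlc)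
      d ((mem_neighborFinset _ _ _).mpr hld)
  have hcs : c ∈ (q.takeUntil l hls).support := by
    have : c ∈ (q.takeUntil l hls).reverse.tail.support := Walk.start_mem_support _
    rw [Walk.support_tail_of_not_nil _ hnn1r] at this
    have := List.mem_of_mem_tail this
    rwa [Walk.support_reverse, List.mem_reverse] at this
  have hds : d ∈ (q.dropUntil l hls).support.tail := by
    have : d ∈ (q.dropUntil l hls).tail.support := Walk.start_mem_support _
    rwa [Walk.support_tail_of_not_nil _ hnn2] at this
  have hnodup := hqp.support_nodup
  rw [← Walk.take_spec q hls, Walk.support_append] at hnodup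
  exact List.disjoint_of_nodup_append hnodup hcs (hcd ▸ hds)

lemma meg_acyclic (hG : G.IsAcyclic) :
    meg G = (Finset.univ.filter fun x => G.degree x = 1).card := by
  apply le_antisymm
  · exact Nat.sInf_le ⟨_, aux_leaves_meg G hG, rfl⟩
  · have hne : {n | ∃ M : Finset V, IsMEGSet G ↑M ∧ M.card = n}.Nonempty :=
      ⟨_, _, aux_leaves_meg G hG, rfl⟩
    obtain ⟨M, hM, hcard⟩ := Nat.sInf_mem hne
    rw [meg, ← hcard]
    apply Finset.card_le_card
    intro x hx
    rw [Finset.mem_filter] at hx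
    exact aux_leaf_mem G hG hM hx.2

end Aux

/-- Removing an edge `uv` with `deg u = 2` and `deg v ≥ 3` from a tree increases `meg` by 1. -/
theorem tree_deleteEdge_deg2_deg3 [Fintype V] (G : SimpleGraph V) [DecidableRel G.Adj]
    (hT : G.IsTree) (u v : V) (huv : G.Adj u v)
    (hu : G.degree u = 2) (hv : 3 ≤ G.degree v) :
    meg (G.deleteEdges {s(u, v)}) = meg G + 1 := by
  classical
  set G' := G.deleteEdges {s(u, v)} with hG'def
  have hle : G' ≤ G := deleteEdges_le _
  have hG'ac : G'.IsAcyclic := fun w c hc => hT.IsAcyclic (c.mapLe hle) (hc.mapLe hle)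
  have huvne : u ≠ v := huv.ne
  -- neighbor finsets
  have hNFu : G'.neighborFinset u = (G.neighborFinset u).erase v := by
    ext y
    simp only [mem_neighborFinset, Finset.mem_erase, hG'def, deleteEdges_adj,
      Set.mem_singleton_iff, Sym2.congr_right]
    constructor
    · rintro ⟨h, hne⟩; exact ⟨fun h' => hne (by rw [h']), h⟩
    · rintro ⟨hne, h⟩; exact ⟨h, fun h' => hne h'⟩
  have hNFv : G'.neighborFinset v = (G.neighborFinset v).erase u := by
    ext y
    simp only [mem_neighborFinset, Finset.mem_erase, hG'def, deleteEdges_adj,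
      Set.mem_singleton_iff]
    constructor
    · rintro ⟨h, hne⟩
      refine ⟨fun h' => hne ?_, h⟩
      rw [h', Sym2.eq_swap]
    · rintro ⟨hne, h⟩
      refine ⟨h, fun h' => hne ?_⟩
      rw [Sym2.eq_iff] at h'
      rcases h' with ⟨h1, h2⟩ | ⟨h1, h2⟩
      · exact h2.trans h1
      · exact h2
  have hNFo : ∀ x, x ≠ u → x ≠ v → G'.neighborFinset x = G.neighborFinset x := by
    intro x hxu hxv
    ext y
    simp only [mem_neighborFinset, hG'def, deleteEdges_adj, Set.mem_singleton_iff]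
    refine ⟨fun h => h.1, fun h => ⟨h, fun hcon => ?_⟩⟩
    rw [Sym2.eq_iff] at hcon
    rcases hcon with ⟨h1, h2⟩ | ⟨h1, h2⟩
    · exact hxu h1
    · exact hxv h1
  have hvNFu : v ∈ G.neighborFinset u := (mem_neighborFinset _ _ _).mpr huv
  have huNFv : u ∈ G.neighborFinset v := (mem_neighborFinset _ _ _).mpr huv.symm
  have hdu' : G'.degree u = 1 := by
    rw [← card_neighborFinset_eq_degree, hNFu, Finset.card_erase_of_mem hvNFu,
      card_neighborFinset_eq_degree, hu]
  have hdv' : G'.degree v = G.degree v - 1 := by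
    rw [← card_neighborFinset_eq_degree, hNFv, Finset.card_erase_of_mem huNFv,
      card_neighborFinset_eq_degree]
  have hdo : ∀ x, x ≠ u → x ≠ v → G'.degree x = G.degree x := by
    intro x hxu hxv
    rw [← card_neighborFinset_eq_degree, hNFo x hxu hxv, card_neighborFinset_eq_degree]
  -- leaf sets
  have hfilter : (Finset.univ.filter fun x => G'.degree x = 1)
      = insert u (Finset.univ.filter fun x => G.degree x = 1) := by
    ext x
    simp only [Finset.mem_filter, Finset.mem_univ, true_and, Finset.mem_insert]
    by_cases hxu : x = u
    · subst hxu; simp [hdu']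
    · by_cases hxv : x = v
      · subst hxv
        rw [hdv']
        constructor
        · intro h; omega
        · rintro (h | h)
          · exact absurd h hxu
          · omega
      · rw [hdo x hxu hxv]
        constructor
        · exact fun h => Or.inr h
        · rintro (h | h)
          · exact absurd h hxu
          · exact h
  have hunotmem : u ∉ (Finset.univ.filter fun x => G.degree x = 1) := by
    simp [hu]
  rw [meg_acyclic G' hG'ac, meg_acyclic G hT.IsAcyclic, hfilter,
    Finset.card_insert_of_notMem hunotmem]
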